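/- For every function f : (ZMod N)^n → ℂ and every x ∈ (ZMod N)^n, the DFT of the restriction of f to L_N is the D_N-periodization of the full DFT of f: ∑_{z ∈ L_N} f(z)·e(−⟨x,z⟩) = (1/N) · ∑_{y ∈ D_N} f̂(x − y), where f̂(w) := ∑_{z ∈ (ZMod N)^n} f(z)·e(−⟨w,z⟩). -/

import Mathlib

set_option maxHeartbeats 1000000

/-- The additive character `e : ZMod N → ℂ`, `e c = exp(2πi · c.val / N)`. -/
noncomputable def eChar (N : ℕ) (c : ZMod N) : ℂ :=
  Complex.exp (2 * Real.pi * Complex.I * (c.val : ℂ) / (N : ℂ))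

lemma eChar_add (N : ℕ) [NeZero N] (a b : ZMod N) :
    eChar N (a + b) = eChar N a * eChar N b := by
  unfold eChar
  rw [← Complex.exp_add]
  have hN : (N : ℂ) ≠ 0 := Nat.cast_ne_zero.mpr (NeZero.ne N)
  have hnat : (a + b).val + N * ((a.val + b.val) / N) = a.val + b.val := by
    rw [ZMod.val_add]; exact Nat.mod_add_div _ _
  have hc : ((a+b).val : ℂ) + N * ((a.val + b.val)/N : ℕ) = (a.val : ℂ) + b.val := by
    exact_mod_cast congrArg (Nat.cast : ℕ → ℂ) hnat
  have hnum : 2 * Real.pi * Complex.I * ((a+b).val : ℂ)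
      = 2 * Real.pi * Complex.I * (a.val : ℂ) + 2 * Real.pi * Complex.I * (b.val : ℂ)
        - ((a.val + b.val)/N : ℕ) * (2 * Real.pi * Complex.I) * N := by
    linear_combination (2 * Real.pi * Complex.I) * hc
  have key : 2 * Real.pi * Complex.I * ((a+b).val : ℂ) / N
      = (2 * Real.pi * Complex.I * (a.val : ℂ) / N + 2 * Real.pi * Complex.I * (b.val : ℂ) / N)
        - ((a.val + b.val)/N : ℕ) * (2 * Real.pi * Complex.I) := by
    rw [hnum, ← add_div, sub_div, mul_div_cancel_right₀ _ hN]
  rw [key, Complex.exp_sub]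
  have h1 : Complex.exp ((((a.val + b.val)/N : ℕ) : ℂ) * (2 * Real.pi * Complex.I)) = 1 := by
    exact_mod_cast Complex.exp_int_mul_two_pi_mul_I (((a.val + b.val)/N : ℕ) : ℤ)
  rw [h1, div_one]

lemma eChar_zero (N : ℕ) [NeZero N] : eChar N 0 = 1 := by
  simp [eChar]

lemma eChar_ne_one (N : ℕ) [NeZero N] {t : ZMod N} (ht : t ≠ 0) : eChar N t ≠ 1 := by
  intro h
  have hN : (N : ℂ) ≠ 0 := Nat.cast_ne_zero.mpr (NeZero.ne N)
  rw [eChar, Complex.exp_eq_one_iff] at h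
  obtain ⟨k, hk⟩ := h
  have h2 : (2 : ℂ) * Real.pi * Complex.I ≠ 0 := by
    simp [Real.pi_ne_zero, Complex.I_ne_zero, Complex.ofReal_ne_zero]
  have h3 : 2 * Real.pi * Complex.I * (t.val : ℂ) = k * (2 * Real.pi * Complex.I) * N := by
    have := congrArg (· * (N : ℂ)) hk
    simpa [div_mul_cancel₀ _ hN] using this
  have hv : (t.val : ℂ) = (k : ℂ) * N := by
    apply mul_left_cancel₀ h2
    linear_combination h3
  have hvz : (t.val : ℤ) = k * N := by exact_mod_cast hv
  have hdvd : N ∣ t.val := by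
    have : (N : ℤ) ∣ (t.val : ℤ) := ⟨k, by linarith [hvz]⟩
    exact_mod_cast this
  have h0 := Nat.eq_zero_of_dvd_of_lt hdvd (ZMod.val_lt t)
  exact ht ((ZMod.val_eq_zero t).mp h0)

lemma eChar_sum (N : ℕ) [NeZero N] (t : ZMod N) :
    ∑ c : ZMod N, eChar N (c * t) = if t = 0 then (N : ℂ) else 0 := by
  split_ifs with h
  · subst h
    simp [eChar_zero N, ZMod.card]
  · have key : eChar N t * ∑ c : ZMod N, eChar N (c * t) = ∑ c : ZMod N, eChar N (c * t) := by
      rw [Finset.mul_sum]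
      refine Fintype.sum_equiv (Equiv.addRight 1) _ _ fun c => ?_
      simp only [Equiv.coe_addRight]
      rw [add_mul, one_mul, eChar_add, mul_comm]
    have h2 : (eChar N t - 1) * ∑ c : ZMod N, eChar N (c * t) = 0 := by
      rw [sub_mul, one_mul, key, sub_self]
    rcases mul_eq_zero.mp h2 with h3 | h3
    · exact absurd (sub_eq_zero.mp h3) (eChar_ne_one N h)
    · exact h3

/-- For every `f : (ZMod N)^(n+1) → ℂ` and every `x`, the DFT of the
restriction of `f` to `L_N` is the `D_N`-periodization of the full DFT of `f`:
`∑_{z ∈ L_N} f(z)·e(-⟨x, z⟩) = (1/N) · ∑_{y ∈ D_N} f̂(x - y)`, where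
`f̂(w) = ∑_{z ∈ (ZMod N)^(n+1)} f(z)·e(-⟨w, z⟩)`. -/
theorem stmt_14 (n N : ℕ) [NeZero N] (b : Fin (n + 1) → ZMod N)
    (f : (Fin (n + 1) → ZMod N) → ℂ) (x : Fin (n + 1) → ZMod N) :
    ∑ z ∈ Finset.univ.filter
        (fun z : Fin (n + 1) → ZMod N => z 0 = ∑ i ∈ Finset.univ.erase 0, b i * z i),
        f z * eChar N (-∑ i, x i * z i) =
      (N : ℂ)⁻¹ *
        ∑ y ∈ Finset.univ.filter
          (fun y : Fin (n + 1) → ZMod N => ∀ i, i ≠ 0 → y i = -b i * y 0),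
          ∑ z : Fin (n + 1) → ZMod N, f z * eChar N (-∑ i, (x i - y i) * z i) := by
  classical
  have hN : (N : ℂ) ≠ 0 := Nat.cast_ne_zero.mpr (NeZero.ne N)
  set g : ZMod N → (Fin (n + 1) → ZMod N) := fun c i => if i = 0 then c else -b i * c with hg
  set T : (Fin (n + 1) → ZMod N) → ZMod N :=
    fun z => z 0 - ∑ i ∈ Finset.univ.erase 0, b i * z i with hT
  -- Step 1: reindex the D_N sum by y 0
  have hreindex :
      ∑ y ∈ Finset.univ.filter
          (fun y : Fin (n + 1) → ZMod N => ∀ i, i ≠ 0 → y i = -b i * y 0),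
        ∑ z : Fin (n + 1) → ZMod N, f z * eChar N (-∑ i, (x i - y i) * z i)
      = ∑ c : ZMod N,
          ∑ z : Fin (n + 1) → ZMod N, f z * eChar N (-∑ i, (x i - g c i) * z i) := by
    have hgy : ∀ y : Fin (n + 1) → ZMod N,
        (∀ i, i ≠ 0 → y i = -b i * y 0) → g (y 0) = y := by
      intro y hy
      funext i
      by_cases hi : i = 0
      · simp [hg, hi]
      · simp only [hg, if_neg hi]
        rw [hy i hi, neg_mul]
    refine Finset.sum_nbij' (fun y => y 0) (fun c => g c) ?_ ?_ ?_ ?_ ?_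
    · intro y _; exact Finset.mem_univ _
    · intro c _
      simp only [Finset.mem_filter, Finset.mem_univ, true_and]
      intro i hi
      simp [hg, hi]
    · intro y hy
      simp only [Finset.mem_filter, Finset.mem_univ, true_and] at hy
      exact hgy y hy
    · intro c _
      show (if (0 : Fin (n + 1)) = 0 then c else -b 0 * c) = c
      rw [if_pos rfl]
    · intro y hy
      simp only [Finset.mem_filter, Finset.mem_univ, true_and] at hy
      rw [hgy y hy]
  rw [hreindex]
  -- Step 2: simplify exponent
  have hexp : ∀ (c : ZMod N) (z : Fin (n + 1) → ZMod N),
      (-∑ i, (x i - g c i) * z i) = (-∑ i, x i * z i) + c * T z := by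
    intro c z
    have h1 : ∑ i, (x i - g c i) * z i = (∑ i, x i * z i) - ∑ i, g c i * z i := by
      rw [← Finset.sum_sub_distrib]
      exact Finset.sum_congr rfl fun i _ => by ring
    have h2 : ∑ i, g c i * z i = c * T z := by
      rw [← Finset.add_sum_erase _ _ (Finset.mem_univ (0 : Fin (n + 1)))]
      have h3 : ∑ i ∈ Finset.univ.erase (0 : Fin (n + 1)), g c i * z i
          = ∑ i ∈ Finset.univ.erase (0 : Fin (n + 1)), -(c * (b i * z i)) := by
        refine Finset.sum_congr rfl fun i hi => ?_
        have : i ≠ 0 := Finset.ne_of_mem_erase hi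
        simp [hg, this]; ring
      rw [h3, Finset.sum_neg_distrib, ← Finset.mul_sum]
      simp [hg, hT]
      ring
    rw [h1, h2]
    ring
  -- Step 3: swap sums and apply character sum
  calc
    ∑ z ∈ Finset.univ.filter
        (fun z : Fin (n + 1) → ZMod N => z 0 = ∑ i ∈ Finset.univ.erase 0, b i * z i),
        f z * eChar N (-∑ i, x i * z i)
      = ∑ z ∈ Finset.univ.filter (fun z : Fin (n + 1) → ZMod N => T z = 0),
          f z * eChar N (-∑ i, x i * z i) := by
        refine Finset.sum_congr ?_ fun _ _ => rfl
        refine Finset.filter_congr fun z _ => ?_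
        simp [hT, sub_eq_zero]
    _ = (N : ℂ)⁻¹ * ∑ z : Fin (n + 1) → ZMod N,
          (f z * eChar N (-∑ i, x i * z i)) * (if T z = 0 then (N : ℂ) else 0) := by
        rw [Finset.sum_filter]
        rw [Finset.mul_sum]
        refine Finset.sum_congr rfl fun z _ => ?_
        by_cases h : T z = 0 <;> simp [h] <;> field_simp <;> ring
    _ = (N : ℂ)⁻¹ * ∑ z : Fin (n + 1) → ZMod N,
          (f z * eChar N (-∑ i, x i * z i)) * ∑ c : ZMod N, eChar N (c * T z) := by
        simp_rw [eChar_sum]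
    _ = (N : ℂ)⁻¹ * ∑ c : ZMod N,
          ∑ z : Fin (n + 1) → ZMod N, f z * eChar N (-∑ i, (x i - g c i) * z i) := by
        congr 1
        simp_rw [Finset.mul_sum]
        rw [Finset.sum_comm]
        refine Finset.sum_congr rfl fun c _ => Finset.sum_congr rfl fun z _ => ?_
        rw [hexp c z, eChar_add]
        ring
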